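/- For any non-negative integers a, b, c, d with ad − bc = 1, there exist non-negative integers n and m with 0 ≤ m ≤ 2^n − 1 such that a = s(m+1), b = s(m), c = s(2^n − (m+1)), d = s(2^n − m), where s is Stern's diatomic sequence. -/

import Mathlib

/-- Stern's diatomic sequence: s(0)=0, s(1)=1, s(2m)=s(m), s(2m+1)=s(m)+s(m+1). -/
def stern : ℕ → ℕ
  | 0 => 0
  | 1 => 1
  | n + 2 =>
    if _h : n % 2 = 0 then stern (n / 2 + 1)
    else stern (n / 2 + 1) + stern (n / 2 + 2)
decreasing_by
  · omega
  · omega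
  · omega

lemma stern_zero : stern 0 = 0 := by rw [stern]

lemma stern_one : stern 1 = 1 := by rw [stern]

lemma stern_two_mul (m : ℕ) : stern (2 * m) = stern m := by
  match m with
  | 0 => rfl
  | k + 1 =>
    show stern (2*k + 2) = _
    rw [stern]
    have h2 : 2 * k % 2 = 0 := by omega
    have h3 : 2 * k / 2 = k := by omega
    simp [h2, h3]

lemma stern_two_mul_add_one (m : ℕ) : stern (2 * m + 1) = stern m + stern (m + 1) := by
  match m with
  | 0 => simp [stern_zero, stern_one]
  | k + 1 =>
    show stern (2*k + 1 + 2) = _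
    rw [stern]
    have h2 : ¬ ((2 * k + 1) % 2 = 0) := by omega
    have h3 : (2 * k + 1) / 2 = k := by omega
    simp [h2, h3]

lemma stern_pow (n : ℕ) : stern (2 ^ n) = 1 := by
  induction n with
  | zero => exact stern_one
  | succ n ih => rw [pow_succ, mul_comm, stern_two_mul, ih]

lemma stern_pow_sub_one (n : ℕ) : stern (2 ^ n - 1) = n := by
  induction n with
  | zero => exact stern_zero
  | succ n ih =>
    have h1 : (1:ℕ) ≤ 2 ^ n := Nat.one_le_two_pow
    have : 2 ^ (n+1) - 1 = 2 * (2 ^ n - 1) + 1 := by rw [pow_succ]; omega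
    rw [this, stern_two_mul_add_one, ih, Nat.sub_add_cancel h1, stern_pow]

lemma stern_aux (N : ℕ) : ∀ a b c d : ℕ, a + b + c + d ≤ N → a * d = b * c + 1 →
    ∃ n m : ℕ, m < 2 ^ n ∧ a = stern (m + 1) ∧ b = stern m ∧
      c = stern (2 ^ n - (m + 1)) ∧ d = stern (2 ^ n - m) := by
  induction N with
  | zero =>
    intro a b c d hle h
    have : a = 0 := by omega
    subst this; simp at h
  | succ N ih =>
    intro a b c d hle h
    by_cases hb : b = 0
    · -- a*d = 1
      have had : a * d = 1 := by have h0 := h; rw [hb] at h0; simpa using h0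
      have ha : a = 1 := by nlinarith [Nat.le_of_dvd one_pos ⟨d, had.symm⟩]
      have hd : d = 1 := by nlinarith
      refine ⟨c, 0, Nat.pow_pos (by norm_num), ?_, ?_, ?_, ?_⟩
      · rw [ha, stern_one]
      · rw [hb, stern_zero]
      · rw [stern_pow_sub_one]
      · rw [Nat.sub_zero, stern_pow, hd]
    · by_cases hc : c = 0
      · have had : a * d = 1 := by rw [h, hc]; ring
        have ha : a = 1 := by nlinarith [Nat.le_of_dvd one_pos ⟨d, had.symm⟩]
        have hd : d = 1 := by nlinarith
        have h1 : (1:ℕ) ≤ 2 ^ b := Nat.one_le_two_pow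
        refine ⟨b, 2 ^ b - 1, by omega, ?_, ?_, ?_, ?_⟩
        · rw [Nat.sub_add_cancel h1, stern_pow, ha]
        · rw [stern_pow_sub_one]
        · rw [Nat.sub_add_cancel h1, Nat.sub_self, hc, stern_zero]
        · have : 2 ^ b - (2 ^ b - 1) = 1 := by omega
          rw [this, hd, stern_one]
      · -- b ≥ 1, c ≥ 1
        have h' : (a:ℤ) * d = (b:ℤ) * c + 1 := by exact_mod_cast h
        rcases le_or_gt a b with hab | hab
        · -- right child: recurse on (a, b-a, c, d-c)
          have hcd : c < d := by
            by_contra hcd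
            push_neg at hcd
            have := Nat.mul_le_mul hab hcd
            nlinarith
          have hdet : a * (d - c) = (b - a) * c + 1 := by
            zify [hab, le_of_lt hcd]
            linear_combination h'
          obtain ⟨n, m, hm, h1, h2, h3, h4⟩ :=
            ih a (b - a) c (d - c) (by omega) hdet
          have hm1 : m + 1 ≤ 2 ^ n := hm
          refine ⟨n + 1, 2 * m + 1, by rw [pow_succ]; omega, ?_, ?_, ?_, ?_⟩
          · have : 2 * m + 1 + 1 = 2 * (m + 1) := by ring
            rw [this, stern_two_mul, ← h1]
          · rw [stern_two_mul_add_one, ← h1, ← h2]; omega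
          · have : 2 ^ (n+1) - (2*m+1+1) = 2 * (2 ^ n - (m+1)) := by
              rw [pow_succ]; omega
            rw [this, stern_two_mul, ← h3]
          · have : 2 ^ (n+1) - (2*m+1) = 2 * (2 ^ n - (m+1)) + 1 := by
              rw [pow_succ]; omega
            have h5 : 2 ^ n - (m + 1) + 1 = 2 ^ n - m := by omega
            rw [this, stern_two_mul_add_one, h5, ← h3, ← h4]; omega
        · -- left child: recurse on (a-b, b, c-d, d)
          have hcd : d ≤ c := by
            by_contra hcd
            push_neg at hcd
            have h1 : b + 1 ≤ a := hab
            have h2 : c + 1 ≤ d := hcd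
            have hmul : (b + 1) * (c + 1) ≤ a * d := Nat.mul_le_mul h1 h2
            have hb1 : 1 ≤ b := by omega
            have hc1 : 1 ≤ c := by omega
            nlinarith [hmul]
          have hdet : (a - b) * d = b * (c - d) + 1 := by
            zify [le_of_lt hab, hcd]
            linear_combination h'
          obtain ⟨n, m, hm, h1, h2, h3, h4⟩ :=
            ih (a - b) b (c - d) d (by omega) hdet
          have hm1 : m + 1 ≤ 2 ^ n := hm
          refine ⟨n + 1, 2 * m, by rw [pow_succ]; omega, ?_, ?_, ?_, ?_⟩
          · rw [stern_two_mul_add_one, ← h1, ← h2]; omega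
          · rw [stern_two_mul, ← h2]
          · have : 2 ^ (n+1) - (2*m+1) = 2 * (2 ^ n - (m+1)) + 1 := by
              rw [pow_succ]; omega
            have h5 : 2 ^ n - (m + 1) + 1 = 2 ^ n - m := by omega
            rw [this, stern_two_mul_add_one, h5, ← h3, ← h4]; omega
          · have : 2 ^ (n+1) - 2*m = 2 * (2 ^ n - m) := by
              rw [pow_succ]; omega
            rw [this, stern_two_mul, ← h4]

theorem unimodular_eq_stern (a b c d : ℕ) (h : a * d = b * c + 1) :
    ∃ n m : ℕ, m < 2 ^ n ∧ a = stern (m + 1) ∧ b = stern m ∧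
      c = stern (2 ^ n - (m + 1)) ∧ d = stern (2 ^ n - m) := by
  exact stern_aux (a + b + c + d) a b c d le_rfl h
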